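/- Let 0 < α, β < π with α + β < π, let A ∈ C₃^α, B ∈ C₃^β. Then AB is not conjugate in SL₂(ℝ) to any rotation R(γ) with π < γ < 2π, and AB ∉ {I, -I}. Moreover if AB is conjugate to R(γ) with 0 < γ < π, then γ ≥ α + β. -/

import Mathlib

open Matrix Real

abbrev SL2R := Matrix.SpecialLinearGroup (Fin 2) ℝ

noncomputable def Rot (θ : ℝ) : Matrix (Fin 2) (Fin 2) ℝ :=
  !![Real.cos θ, -Real.sin θ; Real.sin θ, Real.cos θ]

/-- The conjugacy class C₃^θ of the rotation R(θ) in SL₂(ℝ). -/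
noncomputable def C3 (θ : ℝ) : Set SL2R :=
  {A | ∃ g : SL2R, A.val = g.val * Rot θ * (g⁻¹).val}

namespace ProdC3Aux

lemma aux_neg (X w Z : ℝ) (H : Z^2 + X^2 < w^2) (hw : w ≤ 0) :
    X + w < 0 ∧ 0 < X - w := by
  have hfac : (X + w) * (X - w) < 0 := by nlinarith [sq_nonneg Z]
  rcases mul_neg_iff.mp hfac with ⟨hp, hn⟩ | ⟨hn, hp⟩
  · exfalso; linarith
  · exact ⟨hn, hp⟩

lemma aux_pos (X w Z : ℝ) (H : Z^2 + X^2 < w^2) (hw : 0 < w) : 0 < w + Z := by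
  nlinarith [sq_nonneg (w + Z), sq_nonneg X]

lemma key_sign (sa ca sb cb p q r s : ℝ) (hsa : 0 < sa) (hsb : 0 < sb)
    (ha : sa^2 + ca^2 = 1) (hb : sb^2 + cb^2 = 1) (hdet : p*s - q*r = 1)
    (hcc : 0 < ca + cb)
    (htr : -2 < 2*ca*cb - sa*sb*(p^2+q^2+r^2+s^2)) :
    0 < sa*cb + sa*sb*(p*r+q*s) + ca*sb*(r^2+s^2) := by
  have hRpos : 0 < r^2 + s^2 := by
    rcases lt_or_ge 0 (r^2+s^2) with h | h
    · exact h
    · have hr : r = 0 := by nlinarith [sq_nonneg r, sq_nonneg s]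
      have hs : s = 0 := by nlinarith [sq_nonneg r, sq_nonneg s]
      rw [hr, hs] at hdet; norm_num at hdet
  have hident : (sa*cb + ca*sb*(r^2+s^2))^2 - (sa*sb*(p*r+q*s))^2
        - (sa - sb*(r^2+s^2))^2
      = sa*sb*(r^2+s^2)*(2*ca*cb - sa*sb*(p^2+q^2+r^2+s^2) + 2) := by
    linear_combination (sb^2*(r^2+s^2)^2)*ha + sa^2*hb + sa^2*sb^2*(p*s-q*r+1)*hdet
  have hpos : 0 < sa*sb*(r^2+s^2)*(2*ca*cb - sa*sb*(p^2+q^2+r^2+s^2) + 2) :=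
    mul_pos (by positivity) (by linarith)
  have H : (sa*sb*(p*r+q*s))^2 + (sa - sb*(r^2+s^2))^2
      < (sa*cb + ca*sb*(r^2+s^2))^2 := by linarith [hident, hpos]
  have hca1 : ca < 1 := by nlinarith [mul_pos hsa hsa]
  have hca2 : -1 < ca := by nlinarith [mul_pos hsa hsa]
  have hwpos : 0 < sa*cb + ca*sb*(r^2+s^2) := by
    by_contra hwn
    push_neg at hwn
    obtain ⟨h1, h2⟩ := aux_neg (sa - sb*(r^2+s^2)) (sa*cb + ca*sb*(r^2+s^2))
      (sa*sb*(p*r+q*s)) H hwn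
    have h1' : sa*(1+cb) < sb*(r^2+s^2)*(1-ca) := by linarith [h1]
    have h2' : sb*(r^2+s^2)*(1+ca) < sa*(1-cb) := by linarith [h2]
    linarith [mul_lt_mul_of_pos_left h1' (show (0:ℝ) < 1 + ca by linarith),
      mul_lt_mul_of_pos_left h2' (show (0:ℝ) < 1 - ca by linarith),
      mul_pos hsa (show (0:ℝ) < ca + cb by linarith)]
  have := aux_pos (sa - sb*(r^2+s^2)) (sa*cb + ca*sb*(r^2+s^2))
      (sa*sb*(p*r+q*s)) H hwpos
  linarith [this]

lemma Rot_det (θ : ℝ) : (Rot θ).det = 1 := by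
  simp [Rot, Matrix.det_fin_two_of]
  nlinarith [Real.sin_sq_add_cos_sq θ]

noncomputable def RSL (θ : ℝ) : SL2R := ⟨Rot θ, Rot_det θ⟩

lemma mem_C3_iff {θ : ℝ} {A : SL2R} : A ∈ C3 θ ↔ ∃ g : SL2R, A = g * RSL θ * g⁻¹ := by
  constructor
  · rintro ⟨g, hg⟩
    exact ⟨g, Subtype.ext (hg.trans rfl)⟩
  · rintro ⟨g, rfl⟩
    exact ⟨g, rfl⟩

lemma C3_conj {θ : ℝ} {A : SL2R} (h : A ∈ C3 θ) (g : SL2R) : g * A * g⁻¹ ∈ C3 θ := by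
  rw [mem_C3_iff] at h ⊢
  obtain ⟨k, rfl⟩ := h
  exact ⟨g * k, by group⟩

lemma trace_of_mem {θ : ℝ} {A : SL2R} (h : A ∈ C3 θ) :
    Matrix.trace A.val = 2 * Real.cos θ := by
  rw [mem_C3_iff] at h
  obtain ⟨g, rfl⟩ := h
  have hc : ((g * RSL θ * g⁻¹ : SL2R) : Matrix (Fin 2) (Fin 2) ℝ)
      = g.val * (RSL θ).val * (g⁻¹).val := by simp
  rw [hc, Matrix.trace_mul_cycle]
  have h1 : (g⁻¹).val * g.val = 1 := by
    rw [← Matrix.SpecialLinearGroup.coe_mul, inv_mul_cancel,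
      Matrix.SpecialLinearGroup.coe_one]
  rw [h1, one_mul]
  simp [RSL, Rot, Matrix.trace_fin_two]
  ring

lemma inv_val (g : SL2R) :
    (g⁻¹).val = !![g.val 1 1, -g.val 0 1; -g.val 1 0, g.val 0 0] := by
  rw [Matrix.SpecialLinearGroup.SL2_inv_expl]
  ext i j
  fin_cases i <;> fin_cases j <;> rfl

lemma val_eta (g : SL2R) : g.val = !![g.val 0 0, g.val 0 1; g.val 1 0, g.val 1 1] := by
  ext i j; fin_cases i <;> fin_cases j <;> rfl

lemma entry_of_mem {θ : ℝ} {A : SL2R} (h : A ∈ C3 θ) :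
    ∃ t : ℝ, 0 < t ∧ A.val 1 0 = t * Real.sin θ := by
  rw [mem_C3_iff] at h
  obtain ⟨g, rfl⟩ := h
  refine ⟨(g.val 1 0)^2 + (g.val 1 1)^2, ?_, ?_⟩
  · have hdet : g.val 0 0 * g.val 1 1 - g.val 0 1 * g.val 1 0 = 1 := by
      have := g.2
      rwa [Matrix.det_fin_two] at this
    rcases lt_or_ge 0 ((g.val 1 0)^2 + (g.val 1 1)^2) with h | h
    · exact h
    · exfalso
      have h1 : g.val 1 0 = 0 := by nlinarith [sq_nonneg (g.val 1 0), sq_nonneg (g.val 1 1)]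
      have h2 : g.val 1 1 = 0 := by nlinarith [sq_nonneg (g.val 1 0), sq_nonneg (g.val 1 1)]
      rw [h1, h2] at hdet; norm_num at hdet
  · have hcoe : ((g * RSL θ * g⁻¹ : SL2R) : Matrix (Fin 2) (Fin 2) ℝ)
        = g.val * (RSL θ).val * (g⁻¹).val := by simp
    rw [hcoe, inv_val]
    rw [val_eta g, RSL]
    simp [Rot, Matrix.mul_fin_two]
    ring

lemma RSL_inv (θ : ℝ) : (RSL θ)⁻¹ = RSL (-θ) := by
  apply inv_eq_of_mul_eq_one_right
  apply Subtype.ext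
  have h := Real.sin_sq_add_cos_sq θ
  show (RSL θ).val * (RSL (-θ)).val = 1
  ext i j
  fin_cases i <;> fin_cases j <;>
    simp [RSL, Rot, Matrix.mul_apply, Fin.sum_univ_two, Matrix.one_apply,
      Real.cos_neg, Real.sin_neg] <;> nlinarith [h]

end ProdC3Aux

open ProdC3Aux in
theorem prod_C3_C3_small (α β : ℝ) (hα : α ∈ Set.Ioo 0 π) (hβ : β ∈ Set.Ioo 0 π)
    (hsum : α + β < π) (A B : SL2R) (hA : A ∈ C3 α) (hB : B ∈ C3 β) :
    (∀ γ : ℝ, π < γ → γ < 2 * π → A * B ∉ C3 γ) ∧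
    A * B ≠ 1 ∧ A * B ≠ -1 ∧
    (∀ γ : ℝ, 0 < γ → γ < π → A * B ∈ C3 γ → α + β ≤ γ) := by
  obtain ⟨hα0, hαπ⟩ := hα
  obtain ⟨hβ0, hβπ⟩ := hβ
  have hsa : 0 < Real.sin α := Real.sin_pos_of_pos_of_lt_pi hα0 hαπ
  have hsb : 0 < Real.sin β := Real.sin_pos_of_pos_of_lt_pi hβ0 hβπ
  have hpa : Real.sin α ^ 2 + Real.cos α ^ 2 = 1 := Real.sin_sq_add_cos_sq α
  have hpb : Real.sin β ^ 2 + Real.cos β ^ 2 = 1 := Real.sin_sq_add_cos_sq β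
  have hcc : 0 < Real.cos α + Real.cos β := by
    have h1 : Real.cos (π - β) < Real.cos α :=
      Real.cos_lt_cos_of_nonneg_of_le_pi (le_of_lt hα0) (by linarith) (by linarith)
    rw [Real.cos_pi_sub] at h1
    linarith
  obtain ⟨g, hg⟩ := mem_C3_iff.mp hA
  obtain ⟨h, hh⟩ := mem_C3_iff.mp hB
  set k : SL2R := g⁻¹ * h with hk
  set M : SL2R := RSL α * k * RSL β * k⁻¹ with hM
  have hABM : A * B = g * M * g⁻¹ := by rw [hg, hh, hM, hk]; group
  have hMAB : M = g⁻¹ * (A * B) * (g⁻¹)⁻¹ := by rw [hABM]; group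
  set p : ℝ := k.val 0 0 with hp
  set q : ℝ := k.val 0 1 with hq
  set r : ℝ := k.val 1 0 with hr
  set s : ℝ := k.val 1 1 with hs
  have hdetk : p * s - q * r = 1 := by
    have := k.2
    rwa [Matrix.det_fin_two] at this
  have hMval : M.val = Rot α * !![p, q; r, s] * Rot β * !![s, -q; -r, p] := by
    have h1 : M.val = (RSL α).val * k.val * (RSL β).val * (k⁻¹).val := by
      rw [hM]; simp
    rw [h1, inv_val k, val_eta k]
    rfl
  have hMtr : Matrix.trace M.val
      = 2 * (Real.cos α * Real.cos β)
        - Real.sin α * Real.sin β * (p^2 + q^2 + r^2 + s^2) := by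
    rw [hMval]
    simp [Rot, Matrix.mul_fin_two, Matrix.trace_fin_two]
    linear_combination (2*Real.cos α*Real.cos β)*hdetk
  have hM10 : M.val 1 0
      = Real.sin α * Real.cos β + Real.sin α * Real.sin β * (p*r + q*s)
        + Real.cos α * Real.sin β * (r^2 + s^2) := by
    rw [hMval]
    simp [Rot, Matrix.mul_fin_two]
    linear_combination (Real.sin α*Real.cos β)*hdetk
  have hPR2 : (0:ℝ) ≤ p^2 + q^2 + r^2 + s^2 - 2 := by
    nlinarith [sq_nonneg (p - s), sq_nonneg (q + r)]
  have htrAB : ∀ γ : ℝ, A * B ∈ C3 γ → Matrix.trace M.val = 2 * Real.cos γ := by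
    intro γ hγ
    have hMm : M ∈ C3 γ := by rw [hMAB]; exact C3_conj hγ g⁻¹
    exact trace_of_mem hMm
  refine ⟨?_, ?_, ?_, ?_⟩
  · -- no γ in (π, 2π)
    intro γ hγ1 hγ2 hmem
    have hMm : M ∈ C3 γ := by rw [hMAB]; exact C3_conj hmem g⁻¹
    have htr := trace_of_mem hMm
    have hsinγ : Real.sin γ < 0 := by
      have h1 : 0 < Real.sin (2*π - γ) :=
        Real.sin_pos_of_pos_of_lt_pi (by linarith) (by linarith)
      rw [Real.sin_two_pi_sub] at h1
      linarith
    have hcosγ : -1 < Real.cos γ := by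
      have h1 : Real.cos π < Real.cos (2*π - γ) :=
        Real.cos_lt_cos_of_nonneg_of_le_pi (by linarith) le_rfl (by linarith)
      rw [Real.cos_two_pi_sub, Real.cos_pi] at h1
      exact h1
    have hkey := key_sign (Real.sin α) (Real.cos α) (Real.sin β) (Real.cos β)
      p q r s hsa hsb hpa hpb hdetk hcc (by rw [hMtr] at htr; linarith)
    obtain ⟨t, ht0, htval⟩ := entry_of_mem hMm
    have : M.val 1 0 < 0 := by
      rw [htval]; exact mul_neg_of_pos_of_neg ht0 hsinγ
    rw [hM10] at this
    linarith
  · -- A * B ≠ 1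
    intro h1
    have hM1 : M = 1 := by rw [hMAB, h1]; group
    have htr1 : Matrix.trace M.val = 2 := by
      rw [hM1]
      simp [Matrix.SpecialLinearGroup.coe_one, Matrix.trace_fin_two, Matrix.one_apply]
    have hlt : Real.cos (α + β) < 1 := by
      have := Real.cos_lt_cos_of_nonneg_of_le_pi (le_refl 0) (le_of_lt hsum) (by linarith)
      rwa [Real.cos_zero] at this
    rw [hMtr] at htr1
    have hcadd := Real.cos_add α β
    linarith [mul_nonneg (mul_pos hsa hsb).le hPR2]
  · -- A * B ≠ -1
    intro h1
    have hAinv : A⁻¹ ∈ C3 (-α) :=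
      mem_C3_iff.mpr ⟨g, by rw [hg, ← RSL_inv]; group⟩
    have hBinv : B = A⁻¹ * (-1) := by rw [← h1]; group
    have htrB : Matrix.trace B.val = 2 * Real.cos β := trace_of_mem hB
    have htrA : Matrix.trace (A⁻¹).val = 2 * Real.cos α := by
      have := trace_of_mem hAinv
      rwa [Real.cos_neg] at this
    have hval : B.val = -(A⁻¹).val := by
      rw [hBinv]
      rw [Matrix.SpecialLinearGroup.coe_mul]
      have : ((-1 : SL2R) : Matrix (Fin 2) (Fin 2) ℝ) = -1 := by
        rw [Matrix.SpecialLinearGroup.coe_neg, Matrix.SpecialLinearGroup.coe_one]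
      rw [this, mul_neg_one]
    rw [hval, Matrix.trace_neg, htrA] at htrB
    have hcos : Real.cos β = Real.cos (π - α) := by
      rw [Real.cos_pi_sub]; linarith
    have hβeq : β = π - α := by
      apply Real.injOn_cos ⟨le_of_lt hβ0, le_of_lt hβπ⟩ ⟨by linarith, by linarith⟩ hcos
    linarith
  · -- lower bound on γ
    intro γ hγ0 hγπ hmem
    have htr := htrAB γ hmem
    rw [hMtr] at htr
    by_contra hlt
    push_neg at hlt
    have h1 : Real.cos (α + β) < Real.cos γ :=
      Real.cos_lt_cos_of_nonneg_of_le_pi (le_of_lt hγ0) (le_of_lt hsum) hlt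
    have hcadd := Real.cos_add α β
    linarith [mul_nonneg (mul_pos hsa hsb).le hPR2]
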